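/- Let n ≥ 2 be an integer. Let F : ℝⁿ → ℝⁿ be differentiable everywhere with Jacobian J(x), let x* ∈ ℝⁿ satisfy F(x*) = 0 with J* := J(x*) invertible and c := ‖J*⁻¹‖, and suppose ‖J(x) − J(x*)‖ ≤ M‖x − x*‖ for all x ∈ ℝⁿ, where M > 0. Let x_k ∈ ℝⁿ, B_k ∈ ℝ^{n×n} be sequences such that each B_k is invertible, x_{k+1} = x_k − B_k⁻¹F(x_k), and B_{k+1} = Broyd(B_k, J(x_{k+1}), u_k) for some nonzero vectors u_k ∈ ℝⁿ. Write σ_k := ‖B_k − J(x_k)‖_F and r_k := ‖x_k − x*‖. Let q ∈ (0,1) satisfy cσ₀ ≤ q/(q+1) and √n c M r₀ ≤ (q(1−q)/12)·(q/(1+q) − cσ₀). Then for all k ≥ 0: c²σ_k² ≤ c²σ₀² + ((1+q)/(1−q))(2c√n M r₀ + n c² M² r₀²) ≤ q²/(1+q)², and r_{k+1} ≤ q r_k. -/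

import Mathlib

open Matrix
set_option maxHeartbeats 1600000

noncomputable def vecNorm {n : ℕ} (u : Fin n → ℝ) : ℝ := Real.sqrt (∑ i, u i ^ 2)

noncomputable def frobNorm {n : ℕ} (M : Matrix (Fin n) (Fin n) ℝ) : ℝ :=
  Real.sqrt (∑ i, ∑ j, M i j ^ 2)

noncomputable def specNorm {n : ℕ} (M : Matrix (Fin n) (Fin n) ℝ) : ℝ :=
  sSup {r : ℝ | ∃ u : Fin n → ℝ, vecNorm u = 1 ∧ r = vecNorm (M.mulVec u)}

noncomputable def broyd {n : ℕ} (B A : Matrix (Fin n) (Fin n) ℝ) (u : Fin n → ℝ) :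
    Matrix (Fin n) (Fin n) ℝ :=
  B + (∑ i, u i ^ 2)⁻¹ • ((A - B) * Matrix.vecMulVec u u)

noncomputable def matCLM {n : ℕ} (M : Matrix (Fin n) (Fin n) ℝ) :
    (Fin n → ℝ) →L[ℝ] (Fin n → ℝ) :=
  LinearMap.toContinuousLinearMap M.mulVecLin

namespace BroydenProofAux

variable {n : ℕ}

noncomputable def toE (u : Fin n → ℝ) : EuclideanSpace ℝ (Fin n) := (WithLp.equiv 2 _).symm u

lemma norm_toE (u : Fin n → ℝ) : ‖toE u‖ = vecNorm u := by
  rw [EuclideanSpace.norm_eq, vecNorm]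
  congr 1; apply Finset.sum_congr rfl; intro i _
  rw [Real.norm_eq_abs, sq_abs]; rfl

noncomputable def opE (A : Matrix (Fin n) (Fin n) ℝ) :
    EuclideanSpace ℝ (Fin n) →L[ℝ] EuclideanSpace ℝ (Fin n) :=
  ((EuclideanSpace.equiv (Fin n) ℝ).symm.toContinuousLinearMap.comp (matCLM A)).comp
    (EuclideanSpace.equiv (Fin n) ℝ).toContinuousLinearMap

lemma opE_apply (A : Matrix (Fin n) (Fin n) ℝ) (v : Fin n → ℝ) :
    opE A (toE v) = toE (A.mulVec v) := rfl

lemma toE_surj : Function.Surjective (toE (n := n)) := fun v => ⟨(WithLp.equiv 2 _) v, rfl⟩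
lemma toE_smul (r : ℝ) (v : Fin n → ℝ) : toE (r • v) = r • toE v := rfl

lemma vecNorm_nonneg (u : Fin n → ℝ) : 0 ≤ vecNorm u := Real.sqrt_nonneg _
lemma frobNorm_nonneg (A : Matrix (Fin n) (Fin n) ℝ) : 0 ≤ frobNorm A := Real.sqrt_nonneg _
lemma vecNorm_sq (u : Fin n → ℝ) : vecNorm u ^ 2 = ∑ i, u i ^ 2 :=
  Real.sq_sqrt (Finset.sum_nonneg fun _ _ => sq_nonneg _)
lemma frobNorm_sq (A : Matrix (Fin n) (Fin n) ℝ) : frobNorm A ^ 2 = ∑ i, ∑ j, A i j ^ 2 :=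
  Real.sq_sqrt (Finset.sum_nonneg fun _ _ => Finset.sum_nonneg fun _ _ => sq_nonneg _)

lemma opE_mul (A B : Matrix (Fin n) (Fin n) ℝ) : opE (A * B) = (opE A).comp (opE B) := by
  ext v
  simp [opE, matCLM, mulVec_mulVec]
  rw [← mulVec_mulVec]; rfl

lemma opE_sub (A B : Matrix (Fin n) (Fin n) ℝ) : opE (A - B) = opE A - opE B := by
  ext v
  simp [opE, matCLM, sub_mulVec]

lemma opE_add (A B : Matrix (Fin n) (Fin n) ℝ) : opE (A + B) = opE A + opE B := by
  ext v
  simp [opE, matCLM, add_mulVec]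

lemma opE_neg (A : Matrix (Fin n) (Fin n) ℝ) : opE (-A) = -opE A := by
  ext v
  simp [opE, matCLM, neg_mulVec]

lemma specNorm_eq (hn : 0 < n) (A : Matrix (Fin n) (Fin n) ℝ) : specNorm A = ‖opE A‖ := by
  have hne : {r : ℝ | ∃ u : Fin n → ℝ, vecNorm u = 1 ∧ r = vecNorm (A.mulVec u)}.Nonempty := by
    refine ⟨vecNorm (A.mulVec (Pi.single ⟨0, hn⟩ 1)), Pi.single ⟨0, hn⟩ 1, ?_, rfl⟩
    rw [← norm_toE]
    have : toE (Pi.single (⟨0, hn⟩ : Fin n) (1:ℝ)) = EuclideanSpace.single ⟨0, hn⟩ (1:ℝ) := rfl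
    rw [this, EuclideanSpace.norm_single, norm_one]
  have hub : ∀ r ∈ {r : ℝ | ∃ u : Fin n → ℝ, vecNorm u = 1 ∧ r = vecNorm (A.mulVec u)},
      r ≤ ‖opE A‖ := by
    rintro r ⟨u, hu1, rfl⟩
    rw [← norm_toE, ← opE_apply]
    calc ‖opE A (toE u)‖ ≤ ‖opE A‖ * ‖toE u‖ := (opE A).le_opNorm _
    _ = ‖opE A‖ := by rw [norm_toE, hu1, mul_one]
  refine le_antisymm (csSup_le hne hub) ?_
  have hs0 : 0 ≤ sSup {r : ℝ | ∃ u : Fin n → ℝ, vecNorm u = 1 ∧ r = vecNorm (A.mulVec u)} := by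
    obtain ⟨r, u, hu, rfl⟩ := hne
    refine le_trans ?_ (le_csSup ⟨‖opE A‖, hub⟩ ⟨u, hu, rfl⟩)
    rw [← norm_toE]; positivity
  refine (opE A).opNorm_le_bound hs0 ?_
  intro v
  obtain ⟨w, rfl⟩ := toE_surj v
  rcases eq_or_ne (toE w) 0 with h0 | h0
  · simp only [h0, map_zero, norm_zero, mul_zero]; exact le_rfl
  · have hw : ‖toE w‖ ≠ 0 := norm_ne_zero_iff.2 h0
    have hmem : vecNorm (A.mulVec ((‖toE w‖)⁻¹ • w)) ∈
        {r : ℝ | ∃ u : Fin n → ℝ, vecNorm u = 1 ∧ r = vecNorm (A.mulVec u)} := by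
      refine ⟨_, ?_, rfl⟩
      rw [← norm_toE, toE_smul, norm_smul, norm_inv, norm_norm, norm_toE, ← norm_toE]
      field_simp
    have := le_csSup ⟨‖opE A‖, hub⟩ hmem
    rw [← norm_toE, ← opE_apply, toE_smul, (opE A).map_smul, norm_smul, norm_inv,
      norm_norm] at this
    calc ‖opE A (toE w)‖ = ‖toE w‖ * (‖toE w‖⁻¹ * ‖opE A (toE w)‖) := by field_simp
    _ ≤ ‖toE w‖ * specNorm A := mul_le_mul_of_nonneg_left this (norm_nonneg _)
    _ = specNorm A * ‖toE w‖ := mul_comm _ _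

noncomputable def toE2 (A : Matrix (Fin n) (Fin n) ℝ) : EuclideanSpace ℝ (Fin n × Fin n) :=
  (WithLp.equiv 2 _).symm (fun p => A p.1 p.2)

lemma norm_toE2 (A : Matrix (Fin n) (Fin n) ℝ) : ‖toE2 A‖ = frobNorm A := by
  rw [EuclideanSpace.norm_eq, frobNorm]
  congr 1
  rw [← Fintype.sum_prod_type']
  apply Finset.sum_congr rfl; intro p _
  rw [Real.norm_eq_abs, sq_abs]; rfl

lemma toE2_add (A B' : Matrix (Fin n) (Fin n) ℝ) : toE2 (A + B') = toE2 A + toE2 B' := rfl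

lemma frobNorm_add_le (A B' : Matrix (Fin n) (Fin n) ℝ) :
    frobNorm (A + B') ≤ frobNorm A + frobNorm B' := by
  rw [← norm_toE2, ← norm_toE2, ← norm_toE2, toE2_add]; exact norm_add_le _ _

lemma broyd_sub_le (B' A : Matrix (Fin n) (Fin n) ℝ) (u : Fin n → ℝ) (hu : u ≠ 0) :
    frobNorm (broyd B' A u - A) ≤ frobNorm (B' - A) := by
  set s : ℝ := ∑ i, u i ^ 2 with hs
  have hspos : 0 < s := by
    have : ∃ i, u i ≠ 0 := Function.ne_iff.1 hu
    obtain ⟨i, hi⟩ := this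
    exact Finset.sum_pos' (fun j _ => sq_nonneg _) ⟨i, Finset.mem_univ i, by positivity⟩
  have key : ∀ i, ∑ j, (broyd B' A u - A) i j ^ 2 ≤ ∑ j, (B' - A) i j ^ 2 := by
    intro i
    set C := B' - A with hC
    set d : ℝ := ∑ j, C i j * u j with hd
    have hentry : ∀ j, (broyd B' A u - A) i j = C i j - s⁻¹ * d * u j := by
      intro j
      have h2 : ∑ l, (A i l - B' i l) * (u l * u j)
          = -((∑ l, C i l * u l) * u j) := by
        rw [Finset.sum_mul, ← Finset.sum_neg_distrib]
        refine Finset.sum_congr rfl fun l _ => ?_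
        simp only [hC, Matrix.sub_apply]; ring
      have h1 : (broyd B' A u) i j = B' i j + s⁻¹ * ∑ l, (A i l - B' i l) * (u l * u j) := by
        simp only [broyd, Matrix.add_apply, Matrix.smul_apply, Matrix.mul_apply,
          Matrix.sub_apply, Matrix.vecMulVec_apply, smul_eq_mul, ← hs, Finset.mul_sum]
      rw [Matrix.sub_apply, h1, h2, ← hd]
      simp only [hC, Matrix.sub_apply]
      ring
    have expand : ∀ j, (C i j - s⁻¹ * d * u j) ^ 2
        = C i j ^ 2 - (2 * (s⁻¹ * d)) * (C i j * u j) + (s⁻¹ * d)^2 * u j ^ 2 := by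
      intro j; ring
    calc ∑ j, (broyd B' A u - A) i j ^ 2 = ∑ j, (C i j - s⁻¹ * d * u j) ^ 2 :=
          Finset.sum_congr rfl fun j _ => by rw [hentry j]
    _ = ∑ j, (C i j ^ 2 - (2 * (s⁻¹ * d)) * (C i j * u j) + (s⁻¹ * d)^2 * u j ^ 2) :=
          Finset.sum_congr rfl fun j _ => expand j
    _ = (∑ j, C i j ^ 2) - (2 * (s⁻¹ * d)) * d + (s⁻¹ * d)^2 * s := by
          rw [Finset.sum_add_distrib, Finset.sum_sub_distrib, ← Finset.mul_sum, ← Finset.mul_sum,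
            ← hd, ← hs]
    _ = (∑ j, C i j ^ 2) - d^2 / s := by
          field_simp; ring
    _ ≤ ∑ j, C i j ^ 2 := by
          have : 0 ≤ d^2 / s := by positivity
          linarith
  rw [frobNorm, frobNorm]
  apply Real.sqrt_le_sqrt
  exact Finset.sum_le_sum fun i _ => key i

section
variable (hn : 0 < n)
include hn

lemma specNorm_nonneg (A : Matrix (Fin n) (Fin n) ℝ) : 0 ≤ specNorm A := by
  rw [specNorm_eq hn]; exact norm_nonneg _

lemma vecNorm_mulVec_le (A : Matrix (Fin n) (Fin n) ℝ) (v : Fin n → ℝ) :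
    vecNorm (A.mulVec v) ≤ specNorm A * vecNorm v := by
  rw [specNorm_eq hn, ← norm_toE, ← norm_toE, ← opE_apply]
  exact (opE A).le_opNorm _

lemma specNorm_add_le (A B : Matrix (Fin n) (Fin n) ℝ) :
    specNorm (A + B) ≤ specNorm A + specNorm B := by
  rw [specNorm_eq hn, specNorm_eq hn, specNorm_eq hn, opE_add]; exact norm_add_le _ _

lemma specNorm_neg (A : Matrix (Fin n) (Fin n) ℝ) : specNorm (-A) = specNorm A := by
  rw [specNorm_eq hn, specNorm_eq hn, opE_neg, norm_neg]

lemma specNorm_sub_le (A B : Matrix (Fin n) (Fin n) ℝ) :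
    specNorm (A - B) ≤ specNorm A + specNorm B := by
  have : A - B = A + -B := sub_eq_add_neg A B
  rw [this]
  refine le_trans (specNorm_add_le hn A (-B)) ?_
  rw [specNorm_neg hn]

lemma specNorm_mul_le (A B : Matrix (Fin n) (Fin n) ℝ) :
    specNorm (A * B) ≤ specNorm A * specNorm B := by
  rw [specNorm_eq hn, specNorm_eq hn, specNorm_eq hn, opE_mul]
  exact ContinuousLinearMap.opNorm_comp_le _ _

lemma specNorm_le_frobNorm (A : Matrix (Fin n) (Fin n) ℝ) : specNorm A ≤ frobNorm A := by
  rw [specNorm_eq hn]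
  refine (opE A).opNorm_le_bound (frobNorm_nonneg A) ?_
  intro v
  obtain ⟨w, rfl⟩ := toE_surj v
  rw [opE_apply, norm_toE, norm_toE]
  have h1 : vecNorm (A.mulVec w) ^ 2 ≤ frobNorm A ^ 2 * vecNorm w ^ 2 := by
    rw [vecNorm_sq, frobNorm_sq, vecNorm_sq, Finset.sum_mul]
    refine Finset.sum_le_sum fun i _ => ?_
    have := Finset.sum_mul_sq_le_sq_mul_sq Finset.univ (fun j => A i j) w
    simpa [Matrix.mulVec, dotProduct] using this
  have h2 : 0 ≤ frobNorm A * vecNorm w := mul_nonneg (frobNorm_nonneg A) (vecNorm_nonneg w)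
  nlinarith [vecNorm_nonneg (A.mulVec w)]

lemma frobNorm_le_sqrt_spec (A : Matrix (Fin n) (Fin n) ℝ) :
    frobNorm A ≤ Real.sqrt n * specNorm A := by
  have col : ∀ j, ∑ i, A i j ^ 2 ≤ specNorm A ^ 2 := by
    intro j
    have h1 : A.mulVec (Pi.single j 1) = fun i => A i j := by
      ext i
      simp [Matrix.mulVec_single]
    have h2 : vecNorm (Pi.single j (1:ℝ)) = 1 := by
      rw [← norm_toE]
      have : toE (Pi.single j (1:ℝ)) = EuclideanSpace.single j (1:ℝ) := rfl
      rw [this, EuclideanSpace.norm_single, norm_one]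
    have := vecNorm_mulVec_le hn A (Pi.single j 1)
    rw [h2, mul_one, h1] at this
    have h3 := vecNorm_sq (fun i => A i j)
    nlinarith [vecNorm_nonneg (fun i => A i j), specNorm_nonneg hn A]
  have : frobNorm A ^ 2 ≤ n * specNorm A ^ 2 := by
    rw [frobNorm_sq, Finset.sum_comm]
    calc ∑ j, ∑ i, A i j ^ 2 ≤ ∑ _j : Fin n, specNorm A ^ 2 :=
          Finset.sum_le_sum fun j _ => col j
    _ = n * specNorm A ^ 2 := by simp [Finset.sum_const]
  have hsn : (0:ℝ) ≤ n := Nat.cast_nonneg n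
  nlinarith [frobNorm_nonneg A, specNorm_nonneg hn A, Real.sq_sqrt hsn, Real.sqrt_nonneg (n:ℝ),
    mul_nonneg (Real.sqrt_nonneg (n:ℝ)) (specNorm_nonneg hn A)]

lemma inv_bound (Jm Bm : Matrix (Fin n) (Fin n) ℝ)
    (hJ : IsUnit Jm) (hB : IsUnit Bm) :
    specNorm Bm⁻¹ ≤ specNorm Jm⁻¹ + specNorm Bm⁻¹ * specNorm (Bm - Jm) * specNorm Jm⁻¹ := by
  have hB1 : Bm⁻¹ * Bm = 1 := Matrix.nonsing_inv_mul Bm (Matrix.isUnit_iff_isUnit_det Bm |>.1 hB)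
  have hJ1 : Jm * Jm⁻¹ = 1 := Matrix.mul_nonsing_inv Jm (Matrix.isUnit_iff_isUnit_det Jm |>.1 hJ)
  have key : Bm⁻¹ = Jm⁻¹ + -(Bm⁻¹ * (Bm - Jm) * Jm⁻¹) := by
    have : Bm⁻¹ * (Bm - Jm) * Jm⁻¹ = Jm⁻¹ - Bm⁻¹ := by
      rw [Matrix.mul_sub, Matrix.sub_mul, hB1, Matrix.mul_assoc, hJ1, one_mul, mul_one]
    rw [this]; abel
  calc specNorm Bm⁻¹ = specNorm (Jm⁻¹ + -(Bm⁻¹ * (Bm - Jm) * Jm⁻¹)) := by rw [← key]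
  _ ≤ specNorm Jm⁻¹ + specNorm (-(Bm⁻¹ * (Bm - Jm) * Jm⁻¹)) := specNorm_add_le hn _ _
  _ = specNorm Jm⁻¹ + specNorm (Bm⁻¹ * (Bm - Jm) * Jm⁻¹) := by rw [specNorm_neg hn]
  _ ≤ specNorm Jm⁻¹ + specNorm (Bm⁻¹ * (Bm - Jm)) * specNorm Jm⁻¹ := by
        have := specNorm_mul_le hn (Bm⁻¹ * (Bm - Jm)) Jm⁻¹
        linarith
  _ ≤ specNorm Jm⁻¹ + specNorm Bm⁻¹ * specNorm (Bm - Jm) * specNorm Jm⁻¹ := by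
        have h1 := specNorm_mul_le hn Bm⁻¹ (Bm - Jm)
        have h2 := specNorm_nonneg hn Jm⁻¹
        nlinarith

lemma taylor_bound (F : (Fin n → ℝ) → (Fin n → ℝ))
    (J : (Fin n → ℝ) → Matrix (Fin n) (Fin n) ℝ)
    (hF : ∀ x, HasFDerivAt F (matCLM (J x)) x)
    (Ml : ℝ) (hM : 0 ≤ Ml) (xs : Fin n → ℝ)
    (hLip : ∀ x, specNorm (J x - J xs) ≤ Ml * vecNorm (x - xs)) (y : Fin n → ℝ) :
    vecNorm (F y - F xs - (J xs).mulVec (y - xs)) ≤ Ml * vecNorm (y - xs) ^ 2 := by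
  set e := EuclideanSpace.equiv (Fin n) ℝ with he
  have htoE : ∀ v : EuclideanSpace ℝ (Fin n), toE (e v) = v := fun _ => rfl
  set Fe : EuclideanSpace ℝ (Fin n) → EuclideanSpace ℝ (Fin n) := fun v => toE (F (e v)) with hFe'
  have hopE : ∀ A : Matrix (Fin n) (Fin n) ℝ,
      opE A = e.symm.toContinuousLinearMap.comp ((matCLM A).comp e.toContinuousLinearMap) := by
    intro A; rw [opE, ContinuousLinearMap.comp_assoc]
  have hFe : ∀ v, HasFDerivAt Fe (opE (J (e v))) v := by
    intro v
    rw [hopE]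
    have h1 : HasFDerivAt (F ∘ e) ((matCLM (J (e v))).comp e.toContinuousLinearMap) v :=
      (hF (e v)).comp v e.hasFDerivAt
    exact (e.symm.hasFDerivAt.comp v h1 : _)
  have bound : ∀ z ∈ segment ℝ (toE xs) (toE y),
      ‖opE (J (e z)) - opE (J xs)‖ ≤ Ml * ‖toE y - toE xs‖ := by
    rintro z hz
    rw [← opE_sub, ← specNorm_eq hn]
    refine le_trans (hLip (e z)) (mul_le_mul_of_nonneg_left ?_ hM)
    obtain ⟨a, b, ha, hb, hab, rfl⟩ := hz
    have hz' : a • toE xs + b • toE y - toE xs = b • (toE y - toE xs) := by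
      have : a = 1 - b := by linarith
      rw [this]; module
    have : toE (e (a • toE xs + b • toE y) - xs) = a • toE xs + b • toE y - toE xs := by
      rw [← htoE (a • toE xs + b • toE y)]
      rfl
    rw [← norm_toE, this, hz', norm_smul, Real.norm_eq_abs, abs_of_nonneg hb]
    have : ‖toE y - toE xs‖ = vecNorm (y - xs) := by rw [← norm_toE]; rfl
    nlinarith [norm_nonneg (toE y - toE xs)]
  have seg := Convex.norm_image_sub_le_of_norm_hasFDerivWithin_le'
    (f := Fe) (f' := fun z => opE (J (e z))) (φ := opE (J xs)) (C := Ml * ‖toE y - toE xs‖)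
    (fun z _ => (hFe z).hasFDerivWithinAt) bound (convex_segment _ _)
    (left_mem_segment ℝ (toE xs) (toE y)) (right_mem_segment ℝ (toE xs) (toE y))
  have e1 : Fe (toE y) = toE (F y) := rfl
  have e2 : Fe (toE xs) = toE (F xs) := rfl
  have e3 : toE y - toE xs = toE (y - xs) := rfl
  have e4 : opE (J xs) (toE (y - xs)) = toE ((J xs).mulVec (y - xs)) := opE_apply _ _
  rw [e1, e2, e3, e4] at seg
  have e5 : toE (F y) - toE (F xs) - toE ((J xs).mulVec (y - xs))
      = toE (F y - F xs - (J xs).mulVec (y - xs)) := rfl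
  rw [e5, norm_toE, norm_toE] at seg
  calc vecNorm (F y - F xs - (J xs).mulVec (y - xs)) ≤ Ml * vecNorm (y - xs) * vecNorm (y - xs) :=
        seg
  _ = Ml * vecNorm (y - xs) ^ 2 := by ring

end

lemma vecNorm_add_le (a b : Fin n → ℝ) : vecNorm (a + b) ≤ vecNorm a + vecNorm b := by
  rw [← norm_toE, ← norm_toE, ← norm_toE]
  exact norm_add_le (toE a) (toE b)

lemma vecNorm_sub_le (a b : Fin n → ℝ) : vecNorm (a - b) ≤ vecNorm a + vecNorm b := by
  rw [← norm_toE, ← norm_toE, ← norm_toE]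
  exact norm_sub_le (toE a) (toE b)

lemma arithA (q σ t : ℝ) (hq0 : 0 < q) (hq1 : q < 1) (hσ : 0 ≤ σ) (ht : 0 ≤ t)
    (h2 : t ≤ q*(1-q)/12*(q/(1+q) - σ)) :
    σ^2 + (1+q)/(1-q)*(2*t + t^2) ≤ q^2/(1+q)^2 := by
  have h1q : (0:ℝ) < 1 + q := by linarith
  have h1q' : (0:ℝ) < 1 - q := by linarith
  set a := q/(1+q) with ha
  have hd : 0 ≤ a - σ := by nlinarith [mul_pos hq0 h1q']
  have ha2 : a ≤ 1/2 := by rw [ha]; rw [div_le_iff₀ h1q]; nlinarith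
  have hq14 : q*(1-q) ≤ 1 := by nlinarith
  have ht12 : t ≤ (a - σ)/12 := by nlinarith [mul_le_mul_of_nonneg_right hq14 hd]
  have hta : t ≤ 1/12 := by nlinarith
  have key : (1+q)/(1-q)*(2*t + t^2) ≤ 25*q*(1+q)*(a-σ)/144 := by
    rw [div_mul_eq_mul_div, div_le_iff₀ h1q']
    nlinarith [mul_nonneg ht (mul_nonneg hq0.le h1q'.le), sq_nonneg t,
      mul_nonneg (mul_nonneg hq0.le h1q'.le) hd]
  have goal2 : σ^2 + 25*q*(1+q)*(a-σ)/144 ≤ a^2 := by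
    have haq : a * (1+q) = q := by rw [ha]; field_simp
    nlinarith [sq_nonneg (a - σ), hd, mul_nonneg hd hd]
  have : a^2 = q^2/(1+q)^2 := by rw [ha]; rw [div_pow]
  linarith

lemma arithB (q σ t sk m : ℝ) (hq0 : 0 < q) (hq1 : q < 1) (hσ : 0 ≤ σ) (ht : 0 ≤ t)
    (hsk : 0 ≤ sk) (hm0 : 0 ≤ m)
    (h2 : t ≤ q*(1-q)/12*(q/(1+q) - σ)) (hm : m ≤ t)
    (hk : sk^2 ≤ σ^2 + (1+q)/(1-q)*(2*t + t^2)) :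
    (1+q)*sk + (2+q)*m ≤ q ∧ sk + m < 1 := by
  have h1q : (0:ℝ) < 1 + q := by linarith
  have h1q' : (0:ℝ) < 1 - q := by linarith
  set a := q/(1+q) with ha
  clear_value a
  have haq : a * (1+q) = q := by rw [ha]; field_simp
  have ha2 : a ≤ 1/2 := by rw [ha, div_le_iff₀ h1q]; nlinarith
  have ha0 : 0 < a := ha ▸ div_pos hq0 h1q
  set δ := a - σ with hδ
  clear_value δ
  have hd : 0 ≤ δ := by nlinarith [mul_pos hq0 h1q']
  have hδa : δ ≤ a := by simp [hδ]; linarith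
  have hq14 : q*(1-q) ≤ 1 := by nlinarith
  have ht12 : t ≤ δ/12 := by nlinarith [mul_le_mul_of_nonneg_right hq14 hd]
  have hta : t ≤ 1/12 := by nlinarith
  have key : (1+q)/(1-q)*(2*t + t^2) ≤ 25*q*(1+q)*δ/144 := by
    rw [div_mul_eq_mul_div, div_le_iff₀ h1q']
    nlinarith [mul_nonneg ht (mul_nonneg hq0.le h1q'.le), sq_nonneg t,
      mul_nonneg (mul_nonneg hq0.le h1q'.le) hd]
  set μ := (2+q)*q*(1-q)/(12*(1+q)) with hμ
  clear_value μ
  have hμ0 : 0 ≤ μ := by rw [hμ]; positivity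
  have hμ1 : μ ≤ (7-5*q)/12 := by
    rw [hμ, div_le_div_iff₀ (by positivity) (by norm_num)]
    nlinarith
  have hμ2 : μ ≤ 1 := by nlinarith
  have hsq : sk^2 ≤ (a - μ*δ)^2 := by
    have expand : (a - μ*δ)^2 - (a - δ)^2 = (1-μ)*δ*(2*a - (1+μ)*δ) := by ring
    have e1 : (1-μ)*a ≤ 2*a - (1+μ)*δ := by
      have := mul_le_mul_of_nonneg_left hδa (by linarith : (0:ℝ) ≤ 1+μ)
      linarith
    have h5 : (1-μ)^2*a*δ ≤ (1-μ)*δ*(2*a - (1+μ)*δ) := by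
      have e2 := mul_le_mul_of_nonneg_left e1 (mul_nonneg (sub_nonneg.2 hμ2) hd)
      calc (1-μ)^2*a*δ = (1-μ)*δ*((1-μ)*a) := by ring
      _ ≤ (1-μ)*δ*(2*a - (1+μ)*δ) := e2
    have h6 : 25*q*(1+q)*δ/144 ≤ (1-μ)^2*a*δ := by
      have h7 : 5*(1+q)/12 ≤ 1 - μ := by nlinarith
      have h8 : (5*(1+q)/12)^2 ≤ (1-μ)^2 := by nlinarith
      have h9 : (5*(1+q)/12)^2 * a = 25*q*(1+q)/144 := by
        field_simp
        nlinarith [haq]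
      nlinarith [mul_le_mul_of_nonneg_right h8 hd, mul_nonneg hd ha0.le]
    have hσ2 : σ^2 = (a - δ)^2 := by rw [hδ]; ring
    linarith [hk, key, h6, h5, expand, hσ2]
  have haμδ : 0 ≤ a - μ*δ := by nlinarith [mul_le_mul_of_nonneg_right hμ2 hd]
  have hsk2 : sk ≤ a - μ*δ := by nlinarith
  constructor
  · have h10 : (1+q)*sk ≤ q - (1+q)*μ*δ := by
      have := mul_le_mul_of_nonneg_left hsk2 h1q.le
      nlinarith [haq]
    have h11 : (1+q)*μ*δ = (2+q)*(q*(1-q)/12)*δ := by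
      rw [hμ]; field_simp
    have h12 : (2+q)*m ≤ (2+q)*t := mul_le_mul_of_nonneg_left hm (by linarith)
    have h13 := mul_le_mul_of_nonneg_left h2 (by linarith : (0:ℝ) ≤ 2+q)
    linarith
  · have : sk ≤ a := by linarith [mul_nonneg hμ0 hd]
    have : m ≤ 1/12 := le_trans hm hta
    linarith

lemma arithC (q t sk S P K1 K2 R : ℝ) (hq0 : 0 < q) (hq1 : q < 1) (ht : 0 ≤ t) (hP : 0 ≤ P)
    (hskub : sk ≤ q/(1+q))
    (hS : S ≤ sk + t*(1+q)*P) (hS0 : 0 ≤ S)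
    (hK1e : (1-q)*K1 = 2*t*(1+q)) (hK2e : (1-q^2)*K2 = t^2*(1+q)^2)
    (ih : sk^2 + P*K1 + P^2*K2 ≤ R) :
    S^2 + (P*q)*K1 + (P*q)^2*K2 ≤ R := by
  have h1q : (0:ℝ) < 1 + q := by linarith
  have htP : 0 ≤ t*(1+q)*P := by positivity
  have hsq : S^2 ≤ (sk + t*(1+q)*P)^2 := by nlinarith
  have hcross : 2*sk*(t*(1+q)*P) ≤ 2*t*q*P := by
    have := mul_le_mul_of_nonneg_right hskub htP
    calc 2*sk*(t*(1+q)*P) = 2*(sk*(t*(1+q)*P)) := by ring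
    _ ≤ 2*((q/(1+q))*(t*(1+q)*P)) := by linarith
    _ = 2*t*q*P := by field_simp
  have hterm : 2*t*q ≤ (1-q)*K1 := by rw [hK1e]; nlinarith
  have htermP := mul_le_mul_of_nonneg_right hterm hP
  have hexp : (sk + t*(1+q)*P)^2 = sk^2 + 2*sk*(t*(1+q)*P) + t^2*(1+q)^2*P^2 := by ring
  have hK2P : t^2*(1+q)^2*P^2 + (P*q)^2*K2 = P^2*K2 := by
    have := congrArg (fun z => z * P^2) hK2e
    nlinarith [this]
  nlinarith [hsq, hcross, htermP, hexp, hK2P, ih]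

lemma arithD (s σ m c q : ℝ) (hs0 : 0 ≤ s) (hq : 0 < q)
    (hsD : s*(1-(c*σ+c*m)) ≤ c) (hDpos : 0 < 1-(c*σ+c*m)) (hnn : 0 ≤ σ+2*m)
    (hc0 : 0 ≤ c)
    (hB1 : (1+q)*(c*σ) + (2+q)*(c*m) ≤ q) : s*(σ+2*m) ≤ q := by
  have hq7 : c*(σ+2*m) ≤ q*(1-(c*σ+c*m)) := by nlinarith
  have e1 : s*(σ+2*m) * (1-(c*σ+c*m)) ≤ c*(σ+2*m) := by
    nlinarith [mul_le_mul_of_nonneg_right hsD hnn]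
  nlinarith [e1, hq7, hDpos]

end BroydenProofAux

open BroydenProofAux in
theorem linear_convergence_broyden {n : ℕ} (hn : 2 ≤ n)
    (F : (Fin n → ℝ) → (Fin n → ℝ))
    (J : (Fin n → ℝ) → Matrix (Fin n) (Fin n) ℝ)
    (hF : ∀ x, HasFDerivAt F (matCLM (J x)) x)
    (xs : Fin n → ℝ) (hxs : F xs = 0) (hJs : IsUnit (J xs))
    (c : ℝ) (hc : c = specNorm (J xs)⁻¹)
    (M : ℝ) (hM : 0 < M)
    (hLip : ∀ x, specNorm (J x - J xs) ≤ M * vecNorm (x - xs))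
    (x : ℕ → (Fin n → ℝ)) (B : ℕ → Matrix (Fin n) (Fin n) ℝ)
    (u : ℕ → (Fin n → ℝ)) (hu : ∀ k, u k ≠ 0)
    (hBinv : ∀ k, IsUnit (B k))
    (hxrec : ∀ k, x (k + 1) = x k - (B k)⁻¹.mulVec (F (x k)))
    (hBrec : ∀ k, B (k + 1) = broyd (B k) (J (x (k + 1))) (u k))
    (q : ℝ) (hq0 : 0 < q) (hq1 : q < 1)
    (hinit1 : c * frobNorm (B 0 - J (x 0)) ≤ q / (q + 1))
    (hinit2 : Real.sqrt n * c * M * vecNorm (x 0 - xs)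
      ≤ q * (1 - q) / 12 * (q / (1 + q) - c * frobNorm (B 0 - J (x 0)))) :
    ∀ k : ℕ,
      (c ^ 2 * frobNorm (B k - J (x k)) ^ 2
          ≤ c ^ 2 * frobNorm (B 0 - J (x 0)) ^ 2
            + (1 + q) / (1 - q) * (2 * c * Real.sqrt n * M * vecNorm (x 0 - xs)
                + n * c ^ 2 * M ^ 2 * vecNorm (x 0 - xs) ^ 2) ∧
        c ^ 2 * frobNorm (B 0 - J (x 0)) ^ 2
            + (1 + q) / (1 - q) * (2 * c * Real.sqrt n * M * vecNorm (x 0 - xs)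
                + n * c ^ 2 * M ^ 2 * vecNorm (x 0 - xs) ^ 2)
          ≤ q ^ 2 / (1 + q) ^ 2) ∧
      vecNorm (x (k + 1) - xs) ≤ q * vecNorm (x k - xs) := by
  have hn0 : 0 < n := by omega
  have hc0 : 0 ≤ c := hc ▸ specNorm_nonneg hn0 _
  have h1q : (0:ℝ) < 1 + q := by linarith
  have h1q' : (0:ℝ) < 1 - q := by linarith
  set σf : ℕ → ℝ := fun k => frobNorm (B k - J (x k)) with hσf
  set r : ℕ → ℝ := fun k => vecNorm (x k - xs) with hrdef
  have hσ0 : ∀ k, 0 ≤ σf k := fun k => frobNorm_nonneg _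
  have hr0 : ∀ k, 0 ≤ r k := fun k => vecNorm_nonneg _
  set sn : ℝ := Real.sqrt n with hsn
  have hsn0 : 0 ≤ sn := Real.sqrt_nonneg _
  have hsn2 : sn^2 = n := Real.sq_sqrt (Nat.cast_nonneg n)
  have hsn1 : 1 ≤ sn := by
    rw [hsn, show (1:ℝ) = Real.sqrt 1 from Real.sqrt_one.symm]
    apply Real.sqrt_le_sqrt
    exact_mod_cast (by omega : 1 ≤ n)
  set t : ℝ := sn * c * M * r 0 with ht
  have ht0 : 0 ≤ t := by
    rw [ht]
    exact mul_nonneg (mul_nonneg (mul_nonneg hsn0 hc0) hM.le) (hr0 0)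
  have hinit2' : t ≤ q*(1-q)/12*(q/(1+q) - c*σf 0) := hinit2
  have harithA : (c*σf 0)^2 + (1+q)/(1-q)*(2*t+t^2) ≤ q^2/(1+q)^2 :=
    arithA q (c*σf 0) t hq0 hq1 (mul_nonneg hc0 (hσ0 0)) ht0 hinit2'
  set K1 : ℝ := (1+q)/(1-q)*(2*t) with hK1def
  set K2 : ℝ := (1+q)/(1-q)*t^2 with hK2def
  clear_value K1 K2
  have hK10 : 0 ≤ K1 := by rw [hK1def]; positivity
  have hK20 : 0 ≤ K2 := by rw [hK2def]; positivity
  have hK1e : (1-q)*K1 = 2*t*(1+q) := by rw [hK1def]; field_simp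
  have hK2e : (1-q^2)*K2 = t^2*(1+q)^2 := by
    rw [hK2def]
    have : (1:ℝ) - q^2 = (1-q)*(1+q) := by ring
    rw [this]; field_simp
  have hKsum : K1 + K2 = (1+q)/(1-q)*(2*t+t^2) := by rw [hK1def, hK2def]; ring
  -- the step for r
  have hrstep : ∀ k, (c*σf k)^2 ≤ (c*σf 0)^2 + (1+q)/(1-q)*(2*t+t^2) → r k ≤ r 0 →
      r (k+1) ≤ q * r k := by
    intro k hk hrk
    have hm : c*(M*r k) ≤ t := by
      have e1 : c*(M*r k) ≤ c*(M*r 0) :=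
        mul_le_mul_of_nonneg_left (mul_le_mul_of_nonneg_left hrk hM.le) hc0
      have e2 : c*(M*r 0) ≤ sn*(c*(M*r 0)) := by
        have h9 := mul_le_mul_of_nonneg_right hsn1
          (mul_nonneg hc0 (mul_nonneg hM.le (hr0 0)))
        linarith only [h9]
      calc c*(M*r k) ≤ c*(M*r 0) := e1
      _ ≤ sn*(c*(M*r 0)) := e2
      _ = t := by rw [ht]; ring
    obtain ⟨hB1, hB2⟩ := arithB q (c*σf 0) t (c*σf k) (c*(M*r k)) hq0 hq1
      (mul_nonneg hc0 (hσ0 0)) ht0 (mul_nonneg hc0 (hσ0 k))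
      (mul_nonneg hc0 (mul_nonneg hM.le (hr0 k))) hinit2' hm hk
    -- matrix identities
    have hBk := hBinv k
    have hBmul : (B k)⁻¹ * (B k) = 1 :=
      Matrix.nonsing_inv_mul _ ((Matrix.isUnit_iff_isUnit_det _).1 hBk)
    have hwid : x (k+1) - xs = (B k)⁻¹.mulVec ((B k).mulVec (x k - xs) - F (x k)) := by
      rw [hxrec k, Matrix.mulVec_sub, Matrix.mulVec_mulVec, hBmul, Matrix.one_mulVec]
      abel
    have hw : (B k).mulVec (x k - xs) - F (x k)
        = (B k - J (x k)).mulVec (x k - xs) + (J (x k) - J xs).mulVec (x k - xs)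
          - (F (x k) - F xs - (J xs).mulVec (x k - xs)) := by
      rw [Matrix.sub_mulVec, Matrix.sub_mulVec, hxs]
      abel
    have h1 : vecNorm ((B k - J (x k)).mulVec (x k - xs)) ≤ σf k * r k := by
      refine le_trans (vecNorm_mulVec_le hn0 _ _) ?_
      exact mul_le_mul_of_nonneg_right (specNorm_le_frobNorm hn0 _) (hr0 k)
    have h2 : vecNorm ((J (x k) - J xs).mulVec (x k - xs)) ≤ M * r k * r k := by
      refine le_trans (vecNorm_mulVec_le hn0 _ _) ?_
      exact mul_le_mul_of_nonneg_right (hLip (x k)) (hr0 k)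
    have h3 : vecNorm (F (x k) - F xs - (J xs).mulVec (x k - xs)) ≤ M * r k^2 :=
      taylor_bound hn0 F J hF M hM.le xs hLip (x k)
    have h4 : vecNorm ((B k).mulVec (x k - xs) - F (x k)) ≤ σf k * r k + M*r k*r k + M*r k^2 := by
      rw [hw]
      refine le_trans (vecNorm_sub_le _ _) ?_
      have h5 := vecNorm_add_le ((B k - J (x k)).mulVec (x k - xs))
        ((J (x k) - J xs).mulVec (x k - xs))
      linarith
    have h5 := inv_bound hn0 (J xs) (B k) hJs hBk
    rw [← hc] at h5
    have h6 : specNorm (B k - J xs) ≤ σf k + M * r k := by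
      have he : B k - J xs = (B k - J (x k)) + (J (x k) - J xs) := by abel
      rw [he]
      refine le_trans (specNorm_add_le hn0 _ _) ?_
      have e1 := specNorm_le_frobNorm hn0 (B k - J (x k))
      have e2 := hLip (x k)
      linarith
    set s : ℝ := specNorm (B k)⁻¹ with hsdef
    have hs0 : 0 ≤ s := specNorm_nonneg hn0 _
    have h7 : vecNorm (x (k+1) - xs) ≤ s * (σf k * r k + M*r k*r k + M*r k^2) := by
      rw [hwid]
      exact le_trans (vecNorm_mulVec_le hn0 _ _) (mul_le_mul_of_nonneg_left h4 hs0)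
    have hsD : s * (1 - (c*σf k + c*(M*r k))) ≤ c := by
      have e1 := mul_le_mul_of_nonneg_left h6 (mul_nonneg hs0 hc0)
      linarith only [h5, e1]
    have hDpos : 0 < 1 - (c*σf k + c*(M*r k)) := by linarith
    have hnn : 0 ≤ σf k + 2*(M*r k) := by
      have := mul_nonneg hM.le (hr0 k)
      linarith [hσ0 k]
    have hfinal : s*(σf k + 2*(M*r k)) ≤ q :=
      arithD s (σf k) (M*r k) c q hs0 hq0 hsD hDpos hnn hc0 hB1
    calc r (k+1) ≤ s * (σf k * r k + M*r k*r k + M*r k^2) := h7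
    _ = s*(σf k + 2*(M*r k)) * r k := by ring
    _ ≤ q * r k := mul_le_mul_of_nonneg_right hfinal (hr0 k)
  -- the step for σ
  have hσstep : ∀ k, σf (k+1) ≤ σf k + sn*M*(r (k+1) + r k) := by
    intro k
    have e0 : σf (k+1) = frobNorm (broyd (B k) (J (x (k+1))) (u k) - J (x (k+1))) := by
      simp only [hσf, hBrec k]
    have e1 : frobNorm (broyd (B k) (J (x (k+1))) (u k) - J (x (k+1)))
        ≤ frobNorm (B k - J (x (k+1))) := broyd_sub_le _ _ _ (hu k)
    have e2 : B k - J (x (k+1)) = (B k - J (x k)) + (J (x k) - J (x (k+1))) := by abel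
    have e3 : frobNorm (B k - J (x (k+1))) ≤ σf k + frobNorm (J (x k) - J (x (k+1))) := by
      rw [e2]; exact frobNorm_add_le _ _
    have e4 : specNorm (J (x k) - J (x (k+1))) ≤ M * r k + M * r (k+1) := by
      have he : J (x k) - J (x (k+1)) = (J (x k) - J xs) - (J (x (k+1)) - J xs) := by abel
      rw [he]
      refine le_trans (specNorm_sub_le hn0 _ _) ?_
      have := hLip (x k)
      have := hLip (x (k+1))
      linarith
    have e5 : frobNorm (J (x k) - J (x (k+1))) ≤ sn * (M * r k + M * r (k+1)) := by
      refine le_trans (frobNorm_le_sqrt_spec hn0 _) ?_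
      exact mul_le_mul_of_nonneg_left e4 hsn0
    have e6 : sn * (M * r k + M * r (k+1)) = sn*M*(r (k+1) + r k) := by ring
    rw [e0]
    calc frobNorm (broyd (B k) (J (x (k+1))) (u k) - J (x (k+1)))
        ≤ frobNorm (B k - J (x (k+1))) := e1
    _ ≤ σf k + frobNorm (J (x k) - J (x (k+1))) := e3
    _ ≤ σf k + sn * (M * r k + M * r (k+1)) := by linarith
    _ = σf k + sn*M*(r (k+1) + r k) := by rw [e6]
  -- main induction
  have main : ∀ k, ((c*σf k)^2 + q^k*K1 + (q^k)^2*K2 ≤ (c*σf 0)^2 + K1 + K2)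
      ∧ r k ≤ q^k * r 0 := by
    intro k
    induction k with
    | zero => constructor
              · norm_num
              · norm_num
    | succ k ih =>
      obtain ⟨ihσ, ihr⟩ := ih
      have hp0 : 0 ≤ q^k := pow_nonneg hq0.le k
      have hp1 : q^k ≤ 1 := pow_le_one₀ hq0.le hq1.le
      have hrk : r k ≤ r 0 := by
        have h9 := mul_le_mul_of_nonneg_right hp1 (hr0 0)
        linarith only [ihr, h9]
      have hskb : (c*σf k)^2 ≤ (c*σf 0)^2 + (1+q)/(1-q)*(2*t+t^2) := by
        linarith only [ihσ, mul_nonneg hp0 hK10, mul_nonneg (mul_nonneg hp0 hp0) hK20, hKsum]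
      have hrs := hrstep k hskb hrk
      have hskub : c*σf k ≤ q/(1+q) := by
        have hb1 : (c*σf k)^2 ≤ (q/(1+q))^2 := by
          rw [div_pow]; linarith only [hskb, harithA]
        have hb2 := Real.sqrt_le_sqrt hb1
        rwa [Real.sqrt_sq (mul_nonneg hc0 (hσ0 k)), Real.sqrt_sq (by positivity)] at hb2
      -- bound on c σ (k+1)
      have e1 : r (k+1) + r k ≤ (1+q)*(q^k*r 0) := by
        have := mul_le_mul_of_nonneg_left ihr hq0.le
        linarith [hrs, ihr]
      have e2 : sn*M*(r (k+1) + r k) ≤ sn*M*((1+q)*(q^k*r 0)) :=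
        mul_le_mul_of_nonneg_left e1 (mul_nonneg hsn0 hM.le)
      have e3 := mul_le_mul_of_nonneg_left (hσstep k) hc0
      have hck1 : c*σf (k+1) ≤ c*σf k + t*(1+q)*q^k := by
        have e4 : c*(sn*M*(r (k+1) + r k)) ≤ c*(sn*M*((1+q)*(q^k*r 0))) :=
          mul_le_mul_of_nonneg_left e2 hc0
        have e5 : c*(sn*M*((1+q)*(q^k*r 0))) = t*(1+q)*q^k := by rw [ht]; ring
        linarith only [e3, e4, e5]
      constructor
      · have hC := arithC q t (c*σf k) (c*σf (k+1)) (q^k) K1 K2 ((c*σf 0)^2 + K1 + K2)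
          hq0 hq1 ht0 hp0 hskub hck1 (mul_nonneg hc0 (hσ0 (k+1))) hK1e hK2e ihσ
        have hp : q^(k+1) = q^k * q := pow_succ q k
        rw [hp]
        exact hC
      · have := mul_le_mul_of_nonneg_left ihr hq0.le
        calc r (k+1) ≤ q * r k := hrs
        _ ≤ q * (q^k * r 0) := by linarith
        _ = q^(k+1) * r 0 := by rw [pow_succ]; ring
  intro k
  obtain ⟨h1, h2⟩ := main k
  have hp0 : 0 ≤ q^k := pow_nonneg hq0.le k
  have hp1 : q^k ≤ 1 := pow_le_one₀ hq0.le hq1.le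
  have hrk : r k ≤ r 0 := by
    have h9 := mul_le_mul_of_nonneg_right hp1 (hr0 0)
    linarith only [h2, h9]
  have hskb : (c*σf k)^2 ≤ (c*σf 0)^2 + (1+q)/(1-q)*(2*t+t^2) := by
    linarith only [h1, mul_nonneg hp0 hK10, mul_nonneg (mul_nonneg hp0 hp0) hK20, hKsum]
  have hKeq : (1+q)/(1-q)*(2*c*sn*M*(r 0) + (n:ℝ)*c^2*M^2*(r 0)^2) = K1 + K2 := by
    rw [hK1def, hK2def, ht, show ((n:ℝ)) = sn^2 from hsn2.symm]
    ring
  refine ⟨⟨?_, ?_⟩, ?_⟩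
  · have e1 : c^2*(σf k)^2 = (c*σf k)^2 := by ring
    have e2 : c^2*(σf 0)^2 = (c*σf 0)^2 := by ring
    calc c^2 * (σf k)^2 = (c*σf k)^2 := e1
    _ ≤ (c*σf 0)^2 + K1 + K2 - q^k*K1 - (q^k)^2*K2 := by linarith [h1]
    _ ≤ (c*σf 0)^2 + (K1 + K2) := by
        linarith only [mul_nonneg hp0 hK10, mul_nonneg (mul_nonneg hp0 hp0) hK20]
    _ = c^2*(σf 0)^2 + (1+q)/(1-q)*(2*c*sn*M*(r 0) + (n:ℝ)*c^2*M^2*(r 0)^2) := by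
        rw [hKeq, e2]
  · have e2 : c^2*(σf 0)^2 = (c*σf 0)^2 := by ring
    calc c^2*(σf 0)^2 + (1+q)/(1-q)*(2*c*sn*M*(r 0) + (n:ℝ)*c^2*M^2*(r 0)^2)
        = (c*σf 0)^2 + (K1 + K2) := by rw [hKeq, e2]
    _ = (c*σf 0)^2 + (1+q)/(1-q)*(2*t+t^2) := by rw [hKsum]
    _ ≤ q^2/(1+q)^2 := harithA
  · exact hrstep k hskb hrk
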